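/- Under the empirical framework, assume E‖g(X_1)‖² < ∞. Then, almost surely, inf_{θ ∈ S^{m−1}} (1/n) ∑_{i=1}^n (θᵀ g(X_i))² 1_{θᵀ g(X_i) ≥ 0} converges, as n → ∞, to inf_{θ ∈ S^{m−1}} E[ (θᵀ g(X_1))² 1_{θᵀ g(X_1) ≥ 0} ]. -/

import Mathlib

open MeasureTheory ProbabilityTheory Filter


-- pointwise bound on the positive-part-square function
lemma stmt6_qdiff (a b : ℝ) :
    |(if 0 ≤ a then a ^ 2 else 0) - (if 0 ≤ b then b ^ 2 else 0)| ≤ (|a| + |b|) * |a - b| := by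
  have hq : ∀ x : ℝ, (if 0 ≤ x then x ^ 2 else 0) = (max x 0) ^ 2 := by
    intro x; split_ifs with h
    · rw [max_eq_left h]
    · rw [max_eq_right (le_of_lt (not_le.mp h))]; simp
  rw [hq a, hq b]
  have h1 : max a 0 ^ 2 - max b 0 ^ 2 = (max a 0 + max b 0) * (max a 0 - max b 0) := by ring
  rw [h1, abs_mul]
  have h2 : |max a 0 - max b 0| ≤ |a - b| := abs_max_sub_max_le_abs a b 0
  have h3 : |max a 0 + max b 0| ≤ |a| + |b| := by
    rw [abs_of_nonneg (by positivity)]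
    exact add_le_add (max_le (le_abs_self a) (abs_nonneg a))
      (max_le (le_abs_self b) (abs_nonneg b))
  exact mul_le_mul h3 h2 (abs_nonneg _) (by positivity)

lemma stmt6_qle (a : ℝ) : |if 0 ≤ a then a ^ 2 else 0| ≤ a ^ 2 := by
  split_ifs with h
  · rw [abs_of_nonneg (by positivity)]
  · simp; positivity

-- comparison of infima under uniform closeness
lemma stmt6_inf_diff {α : Type*} {K : Set α} (hK : K.Nonempty)
    {a b : α → ℝ} {ε : ℝ}
    (ha0 : ∀ θ ∈ K, 0 ≤ a θ) (hb0 : ∀ θ ∈ K, 0 ≤ b θ)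
    (h : ∀ θ ∈ K, |a θ - b θ| ≤ ε) :
    |sInf (a '' K) - sInf (b '' K)| ≤ ε := by
  have hane : (a '' K).Nonempty := hK.image a
  have hbne : (b '' K).Nonempty := hK.image b
  have hbda : BddBelow (a '' K) := ⟨0, by rintro y ⟨θ, hθ, rfl⟩; exact ha0 θ hθ⟩
  have hbdb : BddBelow (b '' K) := ⟨0, by rintro y ⟨θ, hθ, rfl⟩; exact hb0 θ hθ⟩
  rw [abs_le]
  constructor
  · rw [neg_le, neg_sub]
    have : sInf (b '' K) - ε ≤ sInf (a '' K) := by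
      apply le_csInf hane
      rintro y ⟨θ, hθ, rfl⟩
      have h1 : sInf (b '' K) ≤ b θ := csInf_le hbdb ⟨θ, hθ, rfl⟩
      have h2 := (abs_le.mp (h θ hθ)).1
      linarith
    linarith
  · have : sInf (a '' K) - ε ≤ sInf (b '' K) := by
      apply le_csInf hbne
      rintro y ⟨θ, hθ, rfl⟩
      have h1 : sInf (a '' K) ≤ a θ := csInf_le hbda ⟨θ, hθ, rfl⟩
      have h2 := (abs_le.mp (h θ hθ)).2
      linarith
    linarith

-- the deterministic core: uniform convergence via Lipschitz + dense pointwise convergence,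
-- then convergence of infima
lemma stmt6_core {α : Type*} [PseudoMetricSpace α] {K D : Set α}
    (hKc : IsCompact K) (hKne : K.Nonempty) (hDK : D ⊆ K) (hDd : K ⊆ closure D)
    {Fn : ℕ → α → ℝ} {F : α → ℝ} {L : ℕ → ℝ} {C : ℝ} (hC0 : 0 ≤ C)
    (hFnL : ∀ n, ∀ θ ∈ K, ∀ θ' ∈ K, |Fn n θ - Fn n θ'| ≤ L n * dist θ θ')
    (hFL : ∀ θ ∈ K, ∀ θ' ∈ K, |F θ - F θ'| ≤ C * dist θ θ')
    (hD : ∀ θ ∈ D, Tendsto (fun n => Fn n θ) atTop (nhds (F θ)))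
    (hL : Tendsto L atTop (nhds C))
    (hFn0 : ∀ n, ∀ θ ∈ K, 0 ≤ Fn n θ) (hF0 : ∀ θ ∈ K, 0 ≤ F θ) :
    Tendsto (fun n => sInf (Fn n '' K)) atTop (nhds (sInf (F '' K))) := by
  have unif : ∀ ε : ℝ, 0 < ε → ∀ᶠ n in atTop, ∀ θ ∈ K, |Fn n θ - F θ| ≤ ε := by
    intro ε hε
    set δ : ℝ := ε / (3 * (C + 1)) with hδdef
    have hδ : 0 < δ := by positivity
    -- cover K by balls of radius δ centered in D
    have hcover : K ⊆ ⋃ d : D, Metric.ball (d : α) δ := by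
      intro x hx
      rcases Metric.mem_closure_iff.mp (hDd hx) δ hδ with ⟨y, hyD, hxy⟩
      exact Set.mem_iUnion.mpr ⟨⟨y, hyD⟩, Metric.mem_ball.mpr (by simpa [dist_comm] using hxy)⟩
    obtain ⟨t, ht⟩ := hKc.elim_finite_subcover (fun d : D => Metric.ball (d : α) δ)
      (fun d => Metric.isOpen_ball) hcover
    -- eventually: pointwise closeness on t, and L n ≤ C + 1
    have hev1 : ∀ᶠ n in atTop, ∀ d ∈ t, |Fn n (d : α) - F (d : α)| ≤ ε / 3 := by
      rw [eventually_all_finset]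
      intro d _
      have := Metric.tendsto_atTop.mp (hD (d : α) d.2) (ε / 3) (by positivity)
      rcases this with ⟨N, hN⟩
      filter_upwards [eventually_ge_atTop N] with n hn
      have := hN n hn
      rw [Real.dist_eq] at this
      linarith
    have hev2 : ∀ᶠ n in atTop, L n ≤ C + 1 := by
      have := hL.eventually_lt_const (show C < C + 1 by linarith)
      filter_upwards [this] with n hn using hn.le
    filter_upwards [hev1, hev2] with n h1 h2 θ hθ
    rcases Set.mem_iUnion₂.mp (ht hθ) with ⟨d, hdt, hdball⟩
    have hdK : (d : α) ∈ K := hDK d.2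
    have hdist : dist θ (d : α) ≤ δ := (Metric.mem_ball.mp hdball).le
    have e1 : |Fn n θ - Fn n (d : α)| ≤ (C + 1) * δ := by
      calc |Fn n θ - Fn n (d : α)| ≤ L n * dist θ (d : α) := hFnL n θ hθ (d : α) hdK
        _ ≤ (C + 1) * δ := by
            apply mul_le_mul h2 hdist dist_nonneg (by linarith)
    have e2 : |Fn n (d : α) - F (d : α)| ≤ ε / 3 := h1 d hdt
    have e3 : |F (d : α) - F θ| ≤ C * δ := by
      calc |F (d : α) - F θ| ≤ C * dist (d : α) θ := hFL (d : α) hdK θ hθ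
        _ ≤ C * δ := by
            rw [dist_comm]
            exact mul_le_mul_of_nonneg_left hdist hC0
    have hCδ : (C + 1) * δ = ε / 3 := by
      rw [hδdef]; field_simp
    have hCδ' : C * δ ≤ ε / 3 := by
      have : C * δ ≤ (C + 1) * δ := by nlinarith
      linarith
    calc |Fn n θ - F θ| = |(Fn n θ - Fn n (d : α)) + (Fn n (d : α) - F (d : α)) + (F (d : α) - F θ)| := by ring_nf
      _ ≤ |Fn n θ - Fn n (d : α)| + |Fn n (d : α) - F (d : α)| + |F (d : α) - F θ| := by
          exact (abs_add_le _ _).trans (add_le_add_left (abs_add_le _ _) _)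
      _ ≤ ε := by linarith
  rw [Metric.tendsto_atTop]
  intro ε hε
  rcases (unif (ε / 2) (by linarith)).exists_forall_of_atTop with ⟨N, hN⟩
  refine ⟨N, fun n hn => ?_⟩
  rw [Real.dist_eq]
  have := stmt6_inf_diff hKne (hFn0 n) hF0 (hN n hn)
  linarith

lemma stmt6_slln {Ω 𝓧 : Type*} [MeasurableSpace Ω] [MeasurableSpace 𝓧]
    (μ : Measure Ω) [IsProbabilityMeasure μ]
    (P : Measure 𝓧) [IsProbabilityMeasure P]
    (X : ℕ → Ω → 𝓧) (hXmeas : ∀ i, Measurable (X i))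
    (hXid : ∀ i, Measure.map (X i) μ = P)
    (hXindep : iIndepFun X μ)
    (φ : 𝓧 → ℝ) (hφ : Measurable φ) (hint : Integrable φ P) :
    ∀ᵐ ω ∂μ, Tendsto (fun n : ℕ => (n : ℝ)⁻¹ * ∑ i ∈ Finset.range n, φ (X i ω))
      atTop (nhds (∫ x, φ x ∂P)) := by
  have hintP : Integrable φ (Measure.map (X 0) μ) := by rw [hXid 0]; exact hint
  have hint0 : Integrable (fun ω => φ (X 0 ω)) μ := by
    have := (integrable_map_measure hintP.aestronglyMeasurable
      (hXmeas 0).aemeasurable).mp hintP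
    exact this
  have hindep : Pairwise (Function.onFun (IndepFun · · μ) fun i ω => φ (X i ω)) := by
    intro i j hij
    exact (hXindep.indepFun hij).comp hφ hφ
  have hident : ∀ i, IdentDistrib (fun ω => φ (X i ω)) (fun ω => φ (X 0 ω)) μ μ := by
    intro i
    refine ⟨(hφ.comp (hXmeas i)).aemeasurable, (hφ.comp (hXmeas 0)).aemeasurable, ?_⟩
    have h1 : Measure.map (fun ω => φ (X i ω)) μ = Measure.map φ P := by
      rw [← hXid i, Measure.map_map hφ (hXmeas i)]; rfl
    have h2 : Measure.map (fun ω => φ (X 0 ω)) μ = Measure.map φ P := by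
      rw [← hXid 0, Measure.map_map hφ (hXmeas 0)]; rfl
    rw [h1, h2]
  have := strong_law_ae_real (fun i ω => φ (X i ω)) hint0 hindep hident
  have hmean : μ[fun ω => φ (X 0 ω)] = ∫ x, φ x ∂P := by
    rw [← hXid 0, integral_map (hXmeas 0).aemeasurable hintP.aestronglyMeasurable]
  rw [hmean] at this
  filter_upwards [this] with ω hω
  convert hω using 2 with n
  rw [div_eq_inv_mul]


/-- almost surely,
`inf_{θ ∈ S^{m-1}} (1/n) ∑_{i<n} (θᵀg(Xᵢ))² 1_{θᵀg(Xᵢ) ≥ 0}` converges to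
`inf_{θ ∈ S^{m-1}} E[(θᵀg(X₁))² 1_{θᵀg(X₁) ≥ 0}]`. -/
theorem stmt6 {Ω 𝓧 : Type*} [MeasurableSpace Ω] [MeasurableSpace 𝓧]
    (μ : Measure Ω) [IsProbabilityMeasure μ]
    (P : Measure 𝓧) [IsProbabilityMeasure P]
    (m : ℕ) (hm : 0 < m)
    (X : ℕ → Ω → 𝓧) (hXmeas : ∀ i, Measurable (X i))
    (hXid : ∀ i, Measure.map (X i) μ = P)
    (hXindep : iIndepFun X μ)
    (g : 𝓧 → Fin m → ℝ) (hgmeas : ∀ j, Measurable fun x => g x j)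
    (hgL2 : ∀ j, MemLp (fun x => g x j) 2 P) :
    ∀ᵐ ω ∂μ,
      Tendsto (fun n : ℕ =>
          sInf ((fun θ : Fin m → ℝ =>
              (n : ℝ)⁻¹ * ∑ i ∈ Finset.range n,
                (if 0 ≤ ∑ j, θ j * g (X i ω) j then (∑ j, θ j * g (X i ω) j) ^ 2 else 0))
            '' {θ : Fin m → ℝ | (∑ j, θ j ^ 2) = 1}))
        atTop
        (nhds (sInf ((fun θ : Fin m → ℝ =>
            ∫ x, (if 0 ≤ ∑ j, θ j * g x j then (∑ j, θ j * g x j) ^ 2 else 0) ∂P)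
          '' {θ : Fin m → ℝ | (∑ j, θ j ^ 2) = 1}))) := by
  classical
  set K : Set (Fin m → ℝ) := {θ : Fin m → ℝ | (∑ j, θ j ^ 2) = 1} with hKdef
  set f : (Fin m → ℝ) → 𝓧 → ℝ := fun θ x =>
    if 0 ≤ ∑ j, θ j * g x j then (∑ j, θ j * g x j) ^ 2 else 0 with hfdef
  set A : 𝓧 → ℝ := fun x => ∑ j, |g x j| with hAdef
  set G : 𝓧 → ℝ := fun x => (A x) ^ 2 with hGdef
  have hA0 : ∀ x, 0 ≤ A x := fun x => Finset.sum_nonneg fun j _ => abs_nonneg _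
  -- coordinates of sphere points are bounded by 1
  have hθ1 : ∀ θ ∈ K, ∀ j, |θ j| ≤ 1 := by
    intro θ hθ j
    rw [← sq_le_one_iff_abs_le_one]
    calc θ j ^ 2 ≤ ∑ j', θ j' ^ 2 :=
          Finset.single_le_sum (fun j' _ => sq_nonneg (θ j')) (Finset.mem_univ j)
      _ = 1 := hθ
  -- dot product bounds
  have hdot : ∀ θ ∈ K, ∀ x, |∑ j, θ j * g x j| ≤ A x := by
    intro θ hθ x
    calc |∑ j, θ j * g x j| ≤ ∑ j, |θ j * g x j| := Finset.abs_sum_le_sum_abs _ _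
      _ ≤ ∑ j, |g x j| := by
          apply Finset.sum_le_sum
          intro j _
          rw [abs_mul]
          exact mul_le_of_le_one_left (abs_nonneg _) (hθ1 θ hθ j)
  have hdotsub : ∀ θ ∈ K, ∀ θ' ∈ K, ∀ x,
      |(∑ j, θ j * g x j) - ∑ j, θ' j * g x j| ≤ dist θ θ' * A x := by
    intro θ _ θ' _ x
    have h1 : (∑ j, θ j * g x j) - ∑ j, θ' j * g x j = ∑ j, (θ j - θ' j) * g x j := by
      rw [← Finset.sum_sub_distrib]; congr 1; ext j; ring
    rw [h1]
    calc |∑ j, (θ j - θ' j) * g x j| ≤ ∑ j, |(θ j - θ' j) * g x j| :=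
          Finset.abs_sum_le_sum_abs _ _
      _ ≤ ∑ j, dist θ θ' * |g x j| := by
          apply Finset.sum_le_sum
          intro j _
          rw [abs_mul]
          apply mul_le_mul_of_nonneg_right _ (abs_nonneg _)
          have := dist_le_pi_dist θ θ' j
          rwa [Real.dist_eq] at this
      _ = dist θ θ' * A x := by rw [← Finset.mul_sum]
  -- Lipschitz bound for f
  have hflip : ∀ θ ∈ K, ∀ θ' ∈ K, ∀ x, |f θ x - f θ' x| ≤ 2 * G x * dist θ θ' := by
    intro θ hθ θ' hθ' x
    calc |f θ x - f θ' x|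
        ≤ (|∑ j, θ j * g x j| + |∑ j, θ' j * g x j|) *
            |(∑ j, θ j * g x j) - ∑ j, θ' j * g x j| := stmt6_qdiff _ _
      _ ≤ (A x + A x) * (dist θ θ' * A x) := by
          apply mul_le_mul (add_le_add (hdot θ hθ x) (hdot θ' hθ' x))
            (hdotsub θ hθ θ' hθ' x) (abs_nonneg _)
          linarith [hA0 x]
      _ = 2 * G x * dist θ θ' := by rw [hGdef]; ring
  -- envelope bound
  have hfle : ∀ θ ∈ K, ∀ x, |f θ x| ≤ G x := by
    intro θ hθ x
    calc |f θ x| ≤ (∑ j, θ j * g x j) ^ 2 := stmt6_qle _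
      _ ≤ (A x) ^ 2 := by
          rw [← sq_abs]
          exact pow_le_pow_left₀ (abs_nonneg _) (hdot θ hθ x) 2
  have hf0 : ∀ θ x, 0 ≤ f θ x := by
    intro θ x
    simp only [hfdef]
    split_ifs <;> positivity
  -- measurability
  have hdotmeas : ∀ θ : Fin m → ℝ, Measurable fun x => ∑ j, θ j * g x j := by
    intro θ
    exact Finset.measurable_sum _ fun j _ => (hgmeas j).const_mul (θ j)
  have hfmeas : ∀ θ : Fin m → ℝ, Measurable (f θ) := by
    intro θ
    exact Measurable.ite (measurableSet_le measurable_const (hdotmeas θ))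
      ((hdotmeas θ).pow_const 2) measurable_const
  have hAmeas : Measurable A :=
    Finset.measurable_sum _ fun j _ => (hgmeas j).abs
  have hGmeas : Measurable G := hAmeas.pow_const 2
  -- integrability
  have hAmem : MemLp A 2 P := by
    have := memLp_finset_sum (μ := P) (p := 2) Finset.univ
      (f := fun j (x : 𝓧) => |g x j|) (fun j _ => (hgL2 j).abs)
    simpa [hAdef] using this
  have hGint : Integrable G P := hAmem.integrable_sq
  have hfint : ∀ θ ∈ K, Integrable (f θ) P := by
    intro θ hθ
    apply hGint.mono' (hfmeas θ).aestronglyMeasurable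
    filter_upwards with x
    rw [Real.norm_eq_abs]
    exact hfle θ hθ x
  -- limit function and its Lipschitz property
  set F : (Fin m → ℝ) → ℝ := fun θ => ∫ x, f θ x ∂P with hFdef
  set C : ℝ := 2 * ∫ x, G x ∂P with hCdef
  have hGint0 : 0 ≤ ∫ x, G x ∂P := integral_nonneg fun x => sq_nonneg _
  have hC0 : 0 ≤ C := by rw [hCdef]; linarith
  have hFL : ∀ θ ∈ K, ∀ θ' ∈ K, |F θ - F θ'| ≤ C * dist θ θ' := by
    intro θ hθ θ' hθ'
    have h1 : F θ - F θ' = ∫ x, (f θ x - f θ' x) ∂P :=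
      (integral_sub (hfint θ hθ) (hfint θ' hθ')).symm
    rw [h1]
    calc |∫ x, (f θ x - f θ' x) ∂P| ≤ ∫ x, |f θ x - f θ' x| ∂P := by
          simpa [Real.norm_eq_abs] using
            norm_integral_le_integral_norm (fun x => f θ x - f θ' x)
      _ ≤ ∫ x, 2 * G x * dist θ θ' ∂P := by
          apply integral_mono ((hfint θ hθ).sub (hfint θ' hθ')).abs
            ((hGint.const_mul 2).mul_const _)
          intro x
          exact hflip θ hθ θ' hθ' x
      _ = C * dist θ θ' := by
          rw [integral_mul_const, integral_const_mul, hCdef]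
  have hF0 : ∀ θ ∈ K, 0 ≤ F θ := fun θ _ => integral_nonneg fun x => hf0 θ x
  -- K is compact and nonempty
  have hKc : IsCompact K := by
    apply Metric.isCompact_of_isClosed_isBounded
    · exact isClosed_eq (continuous_finset_sum _ fun j _ => (continuous_apply j).pow 2)
        continuous_const
    · apply Bornology.IsBounded.subset (Metric.isBounded_closedBall (x := (0 : Fin m → ℝ)) (r := 1))
      intro θ hθ
      rw [Metric.mem_closedBall, dist_zero_right]
      rw [pi_norm_le_iff_of_nonneg zero_le_one]
      intro j
      rw [Real.norm_eq_abs]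
      exact hθ1 θ hθ j
  have hKne : K.Nonempty := by
    refine ⟨fun j => if j = (⟨0, hm⟩ : Fin m) then (1:ℝ) else 0, ?_⟩
    have : (∑ j, (if j = (⟨0, hm⟩ : Fin m) then (1:ℝ) else 0) ^ 2) = 1 := by
      rw [Finset.sum_eq_single (⟨0, hm⟩ : Fin m)]
      · simp
      · intro j _ hj
        rw [if_neg hj]
        simp
      · intro h; exact absurd (Finset.mem_univ _) h
    exact this
  -- countable dense subset of K
  obtain ⟨D, hDK, hDcount, hDd⟩ :=
    (TopologicalSpace.IsSeparable.of_separableSpace K).exists_countable_dense_subset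
  -- almost sure events
  have hG_ae : ∀ᵐ ω ∂μ, Tendsto (fun n : ℕ => (n : ℝ)⁻¹ * ∑ i ∈ Finset.range n, G (X i ω))
      atTop (nhds (∫ x, G x ∂P)) :=
    stmt6_slln μ P X hXmeas hXid hXindep G hGmeas hGint
  have hD_ae : ∀ᵐ ω ∂μ, ∀ θ ∈ D,
      Tendsto (fun n : ℕ => (n : ℝ)⁻¹ * ∑ i ∈ Finset.range n, f θ (X i ω))
        atTop (nhds (F θ)) := by
    rw [ae_ball_iff hDcount]
    intro θ hθ
    exact stmt6_slln μ P X hXmeas hXid hXindep (f θ) (hfmeas θ) (hfint θ (hDK hθ))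
  filter_upwards [hG_ae, hD_ae] with ω h1 h2
  -- apply the deterministic core lemma
  have := stmt6_core (K := K) (D := D) hKc hKne hDK hDd
    (Fn := fun n θ => (n : ℝ)⁻¹ * ∑ i ∈ Finset.range n, f θ (X i ω))
    (F := F)
    (L := fun n => 2 * ((n : ℝ)⁻¹ * ∑ i ∈ Finset.range n, G (X i ω)))
    (C := C) hC0
    (by -- empirical Lipschitz
      intro n θ hθ θ' hθ'
      have key : |(∑ i ∈ Finset.range n, f θ (X i ω)) - ∑ i ∈ Finset.range n, f θ' (X i ω)|
          ≤ (∑ i ∈ Finset.range n, 2 * G (X i ω)) * dist θ θ' := by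
        rw [← Finset.sum_sub_distrib, Finset.sum_mul]
        calc |∑ i ∈ Finset.range n, (f θ (X i ω) - f θ' (X i ω))|
            ≤ ∑ i ∈ Finset.range n, |f θ (X i ω) - f θ' (X i ω)| :=
              Finset.abs_sum_le_sum_abs _ _
          _ ≤ ∑ i ∈ Finset.range n, 2 * G (X i ω) * dist θ θ' :=
              Finset.sum_le_sum fun i _ => hflip θ hθ θ' hθ' (X i ω)
      have hn0 : (0:ℝ) ≤ (n : ℝ)⁻¹ := by positivity
      calc |(n : ℝ)⁻¹ * ∑ i ∈ Finset.range n, f θ (X i ω)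
              - (n : ℝ)⁻¹ * ∑ i ∈ Finset.range n, f θ' (X i ω)|
          = (n : ℝ)⁻¹ * |(∑ i ∈ Finset.range n, f θ (X i ω))
              - ∑ i ∈ Finset.range n, f θ' (X i ω)| := by
            rw [← mul_sub, abs_mul, abs_of_nonneg hn0]
        _ ≤ (n : ℝ)⁻¹ * ((∑ i ∈ Finset.range n, 2 * G (X i ω)) * dist θ θ') :=
            mul_le_mul_of_nonneg_left key hn0
        _ = 2 * ((n : ℝ)⁻¹ * ∑ i ∈ Finset.range n, G (X i ω)) * dist θ θ' := by
            have hs : (∑ i ∈ Finset.range n, 2 * G (X i ω))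
                = 2 * ∑ i ∈ Finset.range n, G (X i ω) := by
              rw [Finset.mul_sum]
            rw [hs]; ring)
    hFL
    (fun θ hθ => h2 θ hθ)
    (by -- L tendsto C
      rw [hCdef]
      exact h1.const_mul 2)
    (fun n θ _ => mul_nonneg (by positivity) (Finset.sum_nonneg fun i _ => hf0 θ (X i ω)))
    hF0
  exact this
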